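/- Let ℓ : ℝ → ℝ be 1-Lipschitz, let σ > 0, and let ℓ_σ = ℓ ∗ φ_σ where φ_σ is the density of the centered Gaussian with variance σ². Then for every positive integer r, the r-th derivative satisfies ℓ_σ^{(r)}(θ) = σ^{−r} (−1)^r ∫ ℓ(θ − t) φ_σ(t) H_r(t/σ) dt, where H_r is the r-th (probabilists') Hermite polynomial; consequently, for all θ_1, θ_2 ∈ ℝ, |ℓ_σ^{(r)}(θ_1) − ℓ_σ^{(r)}(θ_2)| ≤ σ^{−r} |θ_1 − θ_2| √(r!). -/

import Mathlib

open Real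

noncomputable section

/-- Density of the centered Gaussian distribution with variance `σ²`. -/
def gaussPDF (σ t : ℝ) : ℝ :=
  (Real.sqrt (2 * Real.pi * σ ^ 2))⁻¹ * Real.exp (-(t ^ 2) / (2 * σ ^ 2))

/-- Gaussian smoothing: the convolution `ℓ ∗ φ_σ`. -/
def smoothed (σ : ℝ) (ℓ : ℝ → ℝ) (θ : ℝ) : ℝ := ∫ t, ℓ (θ - t) * gaussPDF σ t

open Polynomial MeasureTheory Filter



lemma hermite_derivative (n : ℕ) :
    derivative (hermite (n + 1)) = (n + 1 : ℕ) • hermite n := by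
  induction n with
  | zero => simp [hermite_one, hermite_zero]
  | succ n ih =>
    rw [hermite_succ (n + 1), derivative_sub, derivative_mul, derivative_X, one_mul, ih,
      derivative_smul]
    rw [show derivative (hermite n) = X * hermite n - hermite (n + 1) by
      rw [hermite_succ n]; ring]
    simp only [nsmul_eq_mul]
    push_cast
    ring

lemma gaussPDF_pos {σ : ℝ} (hσ : 0 < σ) (t : ℝ) : 0 < gaussPDF σ t := by
  apply mul_pos (inv_pos.2 _) (Real.exp_pos _)
  apply Real.sqrt_pos.2
  positivity

lemma hasDerivAt_gaussPDF (σ : ℝ) (hσ : 0 < σ) (t : ℝ) :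
    HasDerivAt (gaussPDF σ) (-(t / σ ^ 2) * gaussPDF σ t) t := by
  unfold gaussPDF
  have h1 : HasDerivAt (fun t : ℝ => -(t ^ 2) / (2 * σ ^ 2)) (-(2 * t) / (2 * σ ^ 2)) t := by
    simpa [neg_div] using ((hasDerivAt_pow 2 t).neg.div_const (2 * σ ^ 2))
  have h2 := (h1.exp).const_mul (Real.sqrt (2 * Real.pi * σ ^ 2))⁻¹
  refine h2.congr_deriv ?_
  field_simp

lemma hasDerivAt_hermite_gaussPDF (σ : ℝ) (hσ : 0 < σ) (n : ℕ) (t : ℝ) :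
    HasDerivAt (fun s => (aeval (s / σ) (hermite n) : ℝ) * gaussPDF σ s)
      (-σ⁻¹ * ((aeval (t / σ) (hermite (n + 1)) : ℝ) * gaussPDF σ t)) t := by
  have hpoly : HasDerivAt (fun s : ℝ => (aeval (s / σ) (hermite n) : ℝ))
      ((aeval (t / σ) (derivative (hermite n)) : ℝ) * σ⁻¹) t := by
    have h1 : HasDerivAt (fun s : ℝ => s / σ) σ⁻¹ t := by
      simpa [div_eq_mul_inv] using (hasDerivAt_id t).mul_const σ⁻¹
    have h2 := ((hermite n).hasDerivAt_aeval (t / σ)).comp t h1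
    exact h2
  have := hpoly.mul (hasDerivAt_gaussPDF σ hσ t)
  refine this.congr_deriv ?_
  rw [hermite_succ]
  simp only [map_sub, map_mul, aeval_X]
  have hσ' : (σ : ℝ) ≠ 0 := ne_of_gt hσ
  field_simp
  ring

lemma iteratedDeriv_gaussPDF (σ : ℝ) (hσ : 0 < σ) (n : ℕ) :
    iteratedDeriv n (gaussPDF σ) =
      fun t => (-σ⁻¹) ^ n * ((aeval (t / σ) (hermite n) : ℝ) * gaussPDF σ t) := by
  induction n with
  | zero => funext t; simp [hermite_zero]
  | succ n ih =>
    funext t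
    rw [iteratedDeriv_succ, ih]
    have h := ((hasDerivAt_hermite_gaussPDF σ hσ n t).const_mul ((-σ⁻¹) ^ n)).deriv
    rw [h]
    ring

lemma poly_abs_bound (p : Polynomial ℤ) :
    ∃ C : ℝ, 0 ≤ C ∧ ∀ x : ℝ, |(aeval x p : ℝ)| ≤ C * Real.exp (x ^ 2 / 4) := by
  refine ⟨(∑ i ∈ Finset.range (p.natDegree + 1), |(p.coeff i : ℝ)| * (Nat.factorial i : ℝ)) * Real.exp 1,
    by positivity, fun x => ?_⟩
  have hx : |x| ≤ x ^ 2 / 4 + 1 := by nlinarith [sq_nonneg (|x| / 2 - 1), sq_abs x]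
  have key : ∀ i : ℕ, |x| ^ i ≤ (Nat.factorial i : ℝ) * Real.exp (x ^ 2 / 4) * Real.exp 1 := by
    intro i
    have h1 : |x| ^ i / (Nat.factorial i : ℝ) ≤ Real.exp |x| := Real.pow_div_factorial_le_exp _ (abs_nonneg x) i
    have h2 : Real.exp |x| ≤ Real.exp (x ^ 2 / 4 + 1) := Real.exp_le_exp.2 hx
    have h3 : (0:ℝ) < (Nat.factorial i : ℝ) := by positivity
    rw [div_le_iff₀ h3] at h1
    calc |x| ^ i ≤ Real.exp |x| * (Nat.factorial i : ℝ) := h1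
      _ ≤ Real.exp (x ^ 2 / 4 + 1) * (Nat.factorial i : ℝ) := by gcongr
      _ = (Nat.factorial i : ℝ) * Real.exp (x ^ 2 / 4) * Real.exp 1 := by
          rw [Real.exp_add]; ring
  calc |(aeval x p : ℝ)|
      = |∑ i ∈ Finset.range (p.natDegree + 1), (p.coeff i : ℝ) * x ^ i| := by
        rw [aeval_eq_sum_range]; simp [zsmul_eq_mul]
    _ ≤ ∑ i ∈ Finset.range (p.natDegree + 1), |(p.coeff i : ℝ) * x ^ i| :=
        Finset.abs_sum_le_sum_abs _ _
    _ ≤ ∑ i ∈ Finset.range (p.natDegree + 1),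
          |(p.coeff i : ℝ)| * ((Nat.factorial i : ℝ) * Real.exp (x ^ 2 / 4) * Real.exp 1) := by
        apply Finset.sum_le_sum
        intro i _
        rw [abs_mul, abs_pow]
        exact mul_le_mul_of_nonneg_left (key i) (abs_nonneg _)
    _ = (∑ i ∈ Finset.range (p.natDegree + 1), |(p.coeff i : ℝ)| * (Nat.factorial i : ℝ)) * Real.exp 1 *
          Real.exp (x ^ 2 / 4) := by
        rw [Finset.sum_mul, Finset.sum_mul]
        apply Finset.sum_congr rfl
        intros
        ring


lemma hermite_gauss_bound (σ : ℝ) (hσ : 0 < σ) (p : Polynomial ℤ) :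
    ∃ C : ℝ, 0 ≤ C ∧ ∀ s : ℝ,
      |(aeval (s / σ) p : ℝ)| * gaussPDF σ s ≤ C * Real.exp (-(s ^ 2) / (4 * σ ^ 2)) := by
  obtain ⟨C₀, hC₀, hC⟩ := poly_abs_bound p
  refine ⟨C₀ * (Real.sqrt (2 * Real.pi * σ ^ 2))⁻¹, by positivity, fun s => ?_⟩
  have h1 := hC (s / σ)
  have hg : gaussPDF σ s = (Real.sqrt (2 * Real.pi * σ ^ 2))⁻¹ *
      Real.exp (-(s ^ 2) / (2 * σ ^ 2)) := rfl
  have hc : (0:ℝ) ≤ (Real.sqrt (2 * Real.pi * σ ^ 2))⁻¹ := by positivity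
  have hexp : Real.exp ((s / σ) ^ 2 / 4) * Real.exp (-(s ^ 2) / (2 * σ ^ 2)) =
      Real.exp (-(s ^ 2) / (4 * σ ^ 2)) := by
    rw [← Real.exp_add]
    congr 1
    field_simp
    ring
  calc |(aeval (s / σ) p : ℝ)| * gaussPDF σ s
      ≤ (C₀ * Real.exp ((s / σ) ^ 2 / 4)) * gaussPDF σ s := by
        apply mul_le_mul_of_nonneg_right h1
        have := Real.exp_pos (-(s ^ 2) / (2 * σ ^ 2))
        rw [hg]; positivity
    _ = C₀ * (Real.sqrt (2 * Real.pi * σ ^ 2))⁻¹ *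
          (Real.exp ((s / σ) ^ 2 / 4) * Real.exp (-(s ^ 2) / (2 * σ ^ 2))) := by
        rw [hg]; ring
    _ = C₀ * (Real.sqrt (2 * Real.pi * σ ^ 2))⁻¹ * Real.exp (-(s ^ 2) / (4 * σ ^ 2)) := by
        rw [hexp]

lemma integrable_linear_gauss (a c θ b : ℝ) (hb : 0 < b) :
    Integrable (fun u : ℝ => (a + c * |u|) * Real.exp (-b * (u - θ) ^ 2)) := by
  have hg : Integrable (fun v : ℝ => (a + c * |v + θ|) * Real.exp (-b * v ^ 2)) := by
    apply Integrable.mono'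
      (((integrable_exp_neg_mul_sq hb).const_mul (|a| + |c| * |θ|)).add
        (((integrable_mul_exp_neg_mul_sq hb).abs).const_mul |c|))
    · apply Continuous.aestronglyMeasurable
      continuity
    · filter_upwards with v
      have he : (0:ℝ) < Real.exp (-b * v ^ 2) := Real.exp_pos _
      have h1 : |v + θ| ≤ |v| + |θ| := abs_add_le _ _
      have : abs ((a + c * |v + θ|) * Real.exp (-b * v ^ 2)) ≤
          (|a| + |c| * (|v| + |θ|)) * Real.exp (-b * v ^ 2) := by
        rw [abs_mul, abs_of_pos he]
        apply mul_le_mul_of_nonneg_right _ he.le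
        calc abs (a + c * |v + θ|) ≤ |a| + abs (c * |v + θ|) := abs_add_le _ _
          _ = |a| + |c| * |v + θ| := by rw [abs_mul, abs_abs]
          _ ≤ |a| + |c| * (|v| + |θ|) := by gcongr
      rw [Real.norm_eq_abs]
      refine this.trans ?_
      simp only [Pi.add_apply]
      have hv : abs (v * Real.exp (-b * v ^ 2)) = |v| * Real.exp (-b * v ^ 2) := by
        rw [abs_mul, abs_of_pos he]
      rw [hv]
      ring_nf
      nlinarith [abs_nonneg v, he.le]
  have := hg.comp_sub_right θ
  simpa using this

lemma exp_shift_bound (σ : ℝ) (hσ : 0 < σ) (θ x u : ℝ) (hx : |x - θ| ≤ 1) :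
    Real.exp (-((x - u) ^ 2) / (4 * σ ^ 2)) ≤
      Real.exp ((4 * σ ^ 2)⁻¹) * Real.exp (-((θ - u) ^ 2) / (8 * σ ^ 2)) := by
  rw [← Real.exp_add, Real.exp_le_exp]
  have hb2 : (x - θ) ^ 2 ≤ 1 := by
    have := abs_nonneg (x - θ)
    nlinarith [sq_abs (x - θ)]
  have key : (θ - u) ^ 2 / 2 - 1 ≤ (x - u) ^ 2 := by
    nlinarith [sq_nonneg ((θ - u) + 2 * (x - θ))]
  have hσ2 : (0:ℝ) < σ ^ 2 := by positivity
  have e1 : -(x - u) ^ 2 / (4 * σ ^ 2) = -(x - u) ^ 2 * 2 / (8 * σ ^ 2) := by ring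
  have e2 : (4 * σ ^ 2)⁻¹ + -(θ - u) ^ 2 / (8 * σ ^ 2) = (2 - (θ - u) ^ 2) / (8 * σ ^ 2) := by
    field_simp
    ring
  rw [e1, e2, div_le_div_iff_of_pos_right (by positivity : (0:ℝ) < 8 * σ ^ 2)]
  linarith

lemma continuous_gaussPDF (σ : ℝ) : Continuous (gaussPDF σ) := by
  unfold gaussPDF
  fun_prop

lemma integrable_aeval_gaussPDF (σ : ℝ) (hσ : 0 < σ) (p : Polynomial ℤ) :
    Integrable (fun t : ℝ => (aeval (t / σ) p : ℝ) * gaussPDF σ t) := by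
  obtain ⟨C, hC0, hC⟩ := hermite_gauss_bound σ hσ p
  have hb : (0:ℝ) < (4 * σ ^ 2)⁻¹ := by positivity
  have hint : Integrable (fun t : ℝ => C * Real.exp (-(4 * σ ^ 2)⁻¹ * t ^ 2)) :=
    (integrable_exp_neg_mul_sq hb).const_mul C
  apply hint.mono'
  · exact (((p.continuous_aeval).comp (continuous_id.div_const σ)).mul
      (continuous_gaussPDF σ)).aestronglyMeasurable
  · filter_upwards with t
    rw [Real.norm_eq_abs, abs_mul, abs_of_nonneg (le_of_lt (gaussPDF_pos hσ t))]
    have h1 := hC t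
    have h2 : Real.exp (-(t ^ 2) / (4 * σ ^ 2)) = Real.exp (-(4 * σ ^ 2)⁻¹ * t ^ 2) := by
      congr 1
      field_simp
    rw [← h2]
    exact h1

lemma integrable_growth_gauss (σ : ℝ) (hσ : 0 < σ) (p : Polynomial ℤ) (f : ℝ → ℝ)
    (hf : Continuous f) (A : ℝ) (hA : ∀ u, |f u| ≤ A + |u|) (θ : ℝ) :
    Integrable (fun u : ℝ => f u * ((aeval ((θ - u) / σ) p : ℝ) * gaussPDF σ (θ - u))) := by
  obtain ⟨C, hC0, hC⟩ := hermite_gauss_bound σ hσ p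
  have hb : (0:ℝ) < (4 * σ ^ 2)⁻¹ := by positivity
  have hint := integrable_linear_gauss (A * C) C θ ((4 * σ ^ 2)⁻¹) hb
  apply hint.mono'
  · exact (hf.mul ((p.continuous_aeval.comp
      ((continuous_const.sub continuous_id).div_const σ)).mul
      ((continuous_gaussPDF σ).comp (continuous_const.sub continuous_id)))).aestronglyMeasurable
  · filter_upwards with u
    have hg := (gaussPDF_pos hσ (θ - u)).le
    have h1 := hC (θ - u)
    have h2 : Real.exp (-((θ - u) ^ 2) / (4 * σ ^ 2)) = Real.exp (-(4 * σ ^ 2)⁻¹ * (u - θ) ^ 2) := by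
      congr 1
      field_simp
      ring
    rw [Real.norm_eq_abs, abs_mul, abs_mul, abs_of_nonneg hg]
    calc |f u| * (|(aeval ((θ - u) / σ) p : ℝ)| * gaussPDF σ (θ - u))
        ≤ (A + |u|) * (C * Real.exp (-(4 * σ ^ 2)⁻¹ * (u - θ) ^ 2)) := by
          apply mul_le_mul (hA u) _ (by positivity) _
          · rw [← h2]; exact h1
          · have := hA u
            have := abs_nonneg (f u)
            linarith
      _ = (A * C + C * |u|) * Real.exp (-(4 * σ ^ 2)⁻¹ * (u - θ) ^ 2) := by ring

lemma integrable_growth_gauss' (σ : ℝ) (hσ : 0 < σ) (p : Polynomial ℤ) (g : ℝ → ℝ)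
    (hg : Continuous g) (A : ℝ) (hA : ∀ t, |g t| ≤ A + |t|) :
    Integrable (fun t : ℝ => g t * ((aeval (t / σ) p : ℝ) * gaussPDF σ t)) := by
  obtain ⟨C, hC0, hC⟩ := hermite_gauss_bound σ hσ p
  have hb : (0:ℝ) < (4 * σ ^ 2)⁻¹ := by positivity
  have hint := integrable_linear_gauss (A * C) C 0 ((4 * σ ^ 2)⁻¹) hb
  apply hint.mono'
  · exact (hg.mul ((p.continuous_aeval.comp (continuous_id.div_const σ)).mul
      (continuous_gaussPDF σ))).aestronglyMeasurable
  · filter_upwards with t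
    have hgp := (gaussPDF_pos hσ t).le
    have h1 := hC t
    have h2 : Real.exp (-(t ^ 2) / (4 * σ ^ 2)) = Real.exp (-(4 * σ ^ 2)⁻¹ * (t - 0) ^ 2) := by
      congr 1
      field_simp; ring
    rw [Real.norm_eq_abs, abs_mul, abs_mul, abs_of_nonneg hgp]
    calc |g t| * (|(aeval (t / σ) p : ℝ)| * gaussPDF σ t)
        ≤ (A + |t|) * (C * Real.exp (-(4 * σ ^ 2)⁻¹ * (t - 0) ^ 2)) := by
          apply mul_le_mul (hA t) _ (by positivity) _
          · rw [← h2]; exact h1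
          · have := hA t
            have := abs_nonneg (g t)
            linarith
      _ = (A * C + C * |t|) * Real.exp (-(4 * σ ^ 2)⁻¹ * (t - 0) ^ 2) := by ring

lemma integral_gaussPDF (σ : ℝ) (hσ : 0 < σ) : ∫ t : ℝ, gaussPDF σ t = 1 := by
  unfold gaussPDF
  rw [integral_const_mul]
  have h1 : ∀ t : ℝ, -(t ^ 2) / (2 * σ ^ 2) = -(2 * σ ^ 2)⁻¹ * t ^ 2 := by
    intro t; ring
  simp_rw [h1]
  rw [integral_gaussian ((2 * σ ^ 2)⁻¹)]
  have h2 : Real.pi / (2 * σ ^ 2)⁻¹ = 2 * Real.pi * σ ^ 2 := by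
    field_simp
  rw [h2, inv_mul_cancel₀]
  apply Real.sqrt_ne_zero'.2
  positivity

lemma hasDerivAt_hermite_gauss1 (n : ℕ) (t : ℝ) :
    HasDerivAt (fun s => (aeval s (hermite n) : ℝ) * gaussPDF 1 s)
      (-((aeval t (hermite (n + 1)) : ℝ) * gaussPDF 1 t)) t := by
  have h := hasDerivAt_hermite_gaussPDF 1 one_pos n t
  simp only [div_one, inv_one, neg_one_mul] at h
  exact h

lemma integrable_aeval_mul_gauss1 (p q : Polynomial ℤ) :
    Integrable (fun x : ℝ => (aeval x p : ℝ) * ((aeval x q : ℝ) * gaussPDF 1 x)) := by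
  have h := integrable_aeval_gaussPDF 1 one_pos (p * q)
  simp only [div_one, map_mul] at h
  simpa [mul_assoc] using h

lemma hermite_orth (n : ℕ) :
    ∫ x : ℝ, (aeval x (hermite n) : ℝ) ^ 2 * gaussPDF 1 x = (Nat.factorial n : ℝ) := by
  induction n with
  | zero =>
    simp only [hermite_zero, map_one, one_pow, one_mul, Nat.factorial_zero, Nat.cast_one]
    exact integral_gaussPDF 1 one_pos
  | succ n ih =>
    set u : ℝ → ℝ := fun x => (aeval x (hermite (n + 1)) : ℝ) with hu_def
    set u' : ℝ → ℝ := fun x => ((n : ℝ) + 1) * (aeval x (hermite n) : ℝ) with hu'_def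
    set v : ℝ → ℝ := fun x => (aeval x (hermite n) : ℝ) * gaussPDF 1 x with hv_def
    set v' : ℝ → ℝ := fun x => -((aeval x (hermite (n + 1)) : ℝ) * gaussPDF 1 x) with hv'_def
    have hu : ∀ x, HasDerivAt u (u' x) x := by
      intro x
      have h := (hermite (n + 1)).hasDerivAt_aeval (𝕜 := ℝ) x
      rw [hermite_derivative] at h
      have : (aeval x ((n + 1 : ℕ) • hermite n) : ℝ) = ((n : ℝ) + 1) * aeval x (hermite n) := by
        rw [map_nsmul]
        push_cast
        ring
      rw [this] at h
      exact h
    have hv : ∀ x, HasDerivAt v (v' x) x := hasDerivAt_hermite_gauss1 n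
    have huv' : Integrable (u * v') := by
      have h := (integrable_aeval_mul_gauss1 (hermite (n + 1)) (hermite (n + 1))).neg
      have he : u * v' = fun x => -((aeval x (hermite (n + 1)) : ℝ) *
          ((aeval x (hermite (n + 1)) : ℝ) * gaussPDF 1 x)) := by
        funext x
        simp only [Pi.mul_apply, hu_def, hv'_def]
        ring
      rw [he]
      exact h
    have hu'v : Integrable (u' * v) := by
      have h := (integrable_aeval_mul_gauss1 (hermite n) (hermite n)).const_mul ((n : ℝ) + 1)
      have he : u' * v = fun x => ((n : ℝ) + 1) * ((aeval x (hermite n) : ℝ) *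
          ((aeval x (hermite n) : ℝ) * gaussPDF 1 x)) := by
        funext x
        simp only [Pi.mul_apply, hu'_def, hv_def]
        ring
      rw [he]
      exact h
    have huv : Integrable (u * v) := by
      have h := integrable_aeval_mul_gauss1 (hermite (n + 1)) (hermite n)
      have he : u * v = fun x => (aeval x (hermite (n + 1)) : ℝ) *
          ((aeval x (hermite n) : ℝ) * gaussPDF 1 x) := by
        funext x
        simp only [Pi.mul_apply, hu_def, hv_def]
      rw [he]
      exact h
    have key := MeasureTheory.integral_mul_deriv_eq_deriv_mul_of_integrable (fun x _ => hu x) (fun x _ => hv x) huv' hu'v huv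
    have e1 : ∫ x : ℝ, u x * v' x =
        - ∫ x : ℝ, (aeval x (hermite (n + 1)) : ℝ) ^ 2 * gaussPDF 1 x := by
      rw [← MeasureTheory.integral_neg]
      apply MeasureTheory.integral_congr_ae
      filter_upwards with x
      simp only [hu_def, hv'_def]
      ring
    have e2 : ∫ x : ℝ, u' x * v x =
        ((n : ℝ) + 1) * ∫ x : ℝ, (aeval x (hermite n) : ℝ) ^ 2 * gaussPDF 1 x := by
      rw [← MeasureTheory.integral_const_mul]
      apply MeasureTheory.integral_congr_ae
      filter_upwards with x
      simp only [hu'_def, hv_def]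
      ring
    rw [e1, e2, ih] at key
    have : ∫ x : ℝ, (aeval x (hermite (n + 1)) : ℝ) ^ 2 * gaussPDF 1 x =
        ((n : ℝ) + 1) * (Nat.factorial n : ℝ) := by linarith
    rw [this, Nat.factorial_succ]
    push_cast
    ring

lemma gaussPDF_scale (σ : ℝ) (hσ : 0 < σ) (x : ℝ) :
    gaussPDF σ (σ * x) = σ⁻¹ * gaussPDF 1 x := by
  unfold gaussPDF
  have h1 : Real.sqrt (2 * Real.pi * σ ^ 2) = Real.sqrt (2 * Real.pi * 1 ^ 2) * σ := by
    rw [show 2 * Real.pi * σ ^ 2 = (2 * Real.pi * 1 ^ 2) * σ ^ 2 by ring,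
      Real.sqrt_mul (by positivity), Real.sqrt_sq hσ.le]
  have h2 : -((σ * x) ^ 2) / (2 * σ ^ 2) = -(x ^ 2) / (2 * 1 ^ 2) := by
    field_simp
  rw [h1, h2, mul_inv]
  ring

lemma integrable_gaussPDF (σ : ℝ) (hσ : 0 < σ) : Integrable (gaussPDF σ) := by
  have h := integrable_aeval_gaussPDF σ hσ 1
  simpa using h

lemma hermite_orth_scaled (σ : ℝ) (hσ : 0 < σ) (n : ℕ) :
    ∫ t : ℝ, (aeval (t / σ) (hermite n) : ℝ) ^ 2 * gaussPDF σ t = (Nat.factorial n : ℝ) := by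
  set g : ℝ → ℝ := fun t => (aeval (t / σ) (hermite n) : ℝ) ^ 2 * gaussPDF σ t with hg_def
  have h := MeasureTheory.Measure.integral_comp_mul_left g σ
  have hσ' : σ ≠ 0 := ne_of_gt hσ
  have hgx : ∀ x : ℝ, g (σ * x) =
      σ⁻¹ * ((aeval x (hermite n) : ℝ) ^ 2 * gaussPDF 1 x) := by
    intro x
    simp only [hg_def]
    rw [mul_div_cancel_left₀ _ hσ', gaussPDF_scale σ hσ]
    ring
  simp_rw [hgx] at h
  rw [MeasureTheory.integral_const_mul, hermite_orth n] at h
  rw [abs_of_pos (inv_pos.2 hσ), smul_eq_mul] at h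
  exact (mul_left_cancel₀ (inv_ne_zero hσ') h).symm

lemma hermite_abs_integral_le (σ : ℝ) (hσ : 0 < σ) (r : ℕ) :
    ∫ t : ℝ, |(aeval (t / σ) (hermite r) : ℝ)| * gaussPDF σ t ≤
      Real.sqrt (Nat.factorial r) := by
  set f : ℝ → ℝ := fun t => Real.sqrt (gaussPDF σ t) with hf_def
  set g : ℝ → ℝ := fun t => |(aeval (t / σ) (hermite r) : ℝ)| * Real.sqrt (gaussPDF σ t)
    with hg_def
  have hfc : Continuous f := Real.continuous_sqrt.comp (continuous_gaussPDF σ)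
  have hgc : Continuous g :=
    (continuous_abs.comp ((hermite r).continuous_aeval.comp (continuous_id.div_const σ))).mul hfc
  have hfsq : ∀ t, f t ^ 2 = gaussPDF σ t := fun t => Real.sq_sqrt (gaussPDF_pos hσ t).le
  have hgsq : ∀ t, g t ^ 2 = (aeval (t / σ) (hermite r) : ℝ) ^ 2 * gaussPDF σ t := by
    intro t
    simp only [hg_def, mul_pow, sq_abs, hfsq]; rw [Real.sq_sqrt (gaussPDF_pos hσ t).le]
  have hf2 : MeasureTheory.MemLp f (ENNReal.ofReal 2) := by
    rw [show ENNReal.ofReal 2 = 2 by norm_num]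
    apply (memLp_two_iff_integrable_sq hfc.aestronglyMeasurable).2
    have : (fun t => f t ^ 2) = gaussPDF σ := funext hfsq
    rw [this]
    exact integrable_gaussPDF σ hσ
  have hg2 : MeasureTheory.MemLp g (ENNReal.ofReal 2) := by
    rw [show ENNReal.ofReal 2 = 2 by norm_num]
    apply (memLp_two_iff_integrable_sq hgc.aestronglyMeasurable).2
    have h := integrable_aeval_gaussPDF σ hσ (hermite r * hermite r)
    simp only [map_mul] at h
    have : (fun t => g t ^ 2) =
        fun t => (aeval (t / σ) (hermite r) : ℝ) * (aeval (t / σ) (hermite r) : ℝ) *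
          gaussPDF σ t := by
      funext t
      rw [hgsq t]
      ring
    rw [this]
    exact h
  have hpq : Real.HolderConjugate 2 2 := by constructor <;> norm_num
  have hH := MeasureTheory.integral_mul_le_Lp_mul_Lq_of_nonneg hpq
    (Filter.Eventually.of_forall fun t => Real.sqrt_nonneg _)
    (Filter.Eventually.of_forall fun t =>
      mul_nonneg (abs_nonneg _) (Real.sqrt_nonneg _)) hf2 hg2
  have e1 : ∫ t : ℝ, f t * g t = ∫ t : ℝ, |(aeval (t / σ) (hermite r) : ℝ)| * gaussPDF σ t := by
    apply MeasureTheory.integral_congr_ae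
    filter_upwards with t
    simp only [hf_def, hg_def]
    rw [show Real.sqrt (gaussPDF σ t) * (|(aeval (t / σ) (hermite r) : ℝ)| *
        Real.sqrt (gaussPDF σ t)) = |(aeval (t / σ) (hermite r) : ℝ)| *
        (Real.sqrt (gaussPDF σ t) * Real.sqrt (gaussPDF σ t)) by ring,
      Real.mul_self_sqrt (gaussPDF_pos hσ t).le]
  have e2 : ∫ t : ℝ, f t ^ (2 : ℝ) = 1 := by
    have : ∀ t : ℝ, f t ^ (2 : ℝ) = gaussPDF σ t := by
      intro t
      rw [show (2:ℝ) = ((2:ℕ):ℝ) by norm_num, Real.rpow_natCast, hfsq t]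
    simp_rw [this]
    exact integral_gaussPDF σ hσ
  have e3 : ∫ t : ℝ, g t ^ (2 : ℝ) = (Nat.factorial r : ℝ) := by
    have : ∀ t : ℝ, g t ^ (2 : ℝ) = (aeval (t / σ) (hermite r) : ℝ) ^ 2 * gaussPDF σ t := by
      intro t
      rw [show (2:ℝ) = ((2:ℕ):ℝ) by norm_num, Real.rpow_natCast, hgsq t]
    simp_rw [this]
    exact hermite_orth_scaled σ hσ r
  rw [e1, e2, e3] at hH
  have : (1 : ℝ) ^ (1 / 2 : ℝ) * (Nat.factorial r : ℝ) ^ (1 / 2 : ℝ) =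
      Real.sqrt (Nat.factorial r) := by
    rw [Real.one_rpow, one_mul, Real.sqrt_eq_rpow]
  rw [this] at hH
  exact hH


def Gfun (σ : ℝ) (ℓ : ℝ → ℝ) (n : ℕ) (θ : ℝ) : ℝ :=
  ∫ u, ℓ u * ((aeval ((θ - u) / σ) (hermite n) : ℝ) * gaussPDF σ (θ - u))

variable {σ : ℝ} {ℓ : ℝ → ℝ}

lemma lip_growth (hℓ : LipschitzWith 1 ℓ) (u : ℝ) : |ℓ u| ≤ |ℓ 0| + |u| := by
  have h := hℓ.dist_le_mul u 0
  rw [Real.dist_eq, Real.dist_eq, NNReal.coe_one, one_mul, sub_zero] at h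
  calc |ℓ u| = |ℓ 0 + (ℓ u - ℓ 0)| := by ring_nf
    _ ≤ |ℓ 0| + |ℓ u - ℓ 0| := abs_add_le _ _
    _ ≤ |ℓ 0| + |u| := by linarith

lemma integrable_Gfun_integrand (hσ : 0 < σ) (hℓ : LipschitzWith 1 ℓ) (n : ℕ) (θ : ℝ) :
    Integrable (fun u : ℝ =>
      ℓ u * ((aeval ((θ - u) / σ) (hermite n) : ℝ) * gaussPDF σ (θ - u))) :=
  integrable_growth_gauss σ hσ (hermite n) ℓ hℓ.continuous (|ℓ 0|) (lip_growth hℓ) θ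

lemma hasDerivAt_Gfun (hσ : 0 < σ) (hℓ : LipschitzWith 1 ℓ) (n : ℕ) (θ : ℝ) :
    HasDerivAt (Gfun σ ℓ n) (-σ⁻¹ * Gfun σ ℓ (n + 1) θ) θ := by
  obtain ⟨C, hC0, hC⟩ := hermite_gauss_bound σ hσ (hermite (n + 1))
  set K : ℝ := σ⁻¹ * C * Real.exp ((4 * σ ^ 2)⁻¹) with hK_def
  have hK0 : 0 ≤ K := by positivity
  set bound : ℝ → ℝ := fun u => (|ℓ 0| * K + K * |u|) * Real.exp (-(8 * σ ^ 2)⁻¹ * (u - θ) ^ 2)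
    with hbound_def
  have key := hasDerivAt_integral_of_dominated_loc_of_deriv_le (μ := volume)
    (F := fun x u => ℓ u * ((aeval ((x - u) / σ) (hermite n) : ℝ) * gaussPDF σ (x - u)))
    (F' := fun x u => ℓ u *
      (-σ⁻¹ * ((aeval ((x - u) / σ) (hermite (n + 1)) : ℝ) * gaussPDF σ (x - u))))
    (x₀ := θ) (bound := bound) (Metric.ball_mem_nhds θ one_pos) ?_ ?_ ?_ ?_ ?_ ?_
  · have h2 : (∫ u : ℝ, ℓ u *
        (-σ⁻¹ * ((aeval ((θ - u) / σ) (hermite (n + 1)) : ℝ) * gaussPDF σ (θ - u)))) =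
        -σ⁻¹ * Gfun σ ℓ (n + 1) θ := by
      rw [Gfun, ← MeasureTheory.integral_const_mul]
      apply MeasureTheory.integral_congr_ae
      filter_upwards with u
      ring
    rw [h2] at key
    exact key.2
  · filter_upwards with x
    exact (hℓ.continuous.mul (((hermite n).continuous_aeval.comp
      ((continuous_const.sub continuous_id).div_const σ)).mul
      ((continuous_gaussPDF σ).comp (continuous_const.sub continuous_id)))).aestronglyMeasurable
  · exact integrable_Gfun_integrand hσ hℓ n θ
  · exact (hℓ.continuous.mul (continuous_const.mul
      ((((hermite (n + 1)).continuous_aeval.comp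
      ((continuous_const.sub continuous_id).div_const σ)).mul
      ((continuous_gaussPDF σ).comp (continuous_const.sub continuous_id)))))).aestronglyMeasurable
  · filter_upwards with u
    intro x hx
    have hx1 : |x - θ| ≤ 1 := by
      rw [Metric.mem_ball, Real.dist_eq] at hx
      exact hx.le
    have hb1 := hC (x - u)
    have hshift := exp_shift_bound σ hσ θ x u hx1
    have hgp := (gaussPDF_pos hσ (x - u)).le
    have hlu := lip_growth hℓ u
    rw [Real.norm_eq_abs, abs_mul, abs_mul, abs_mul, abs_neg, abs_inv,
      abs_of_pos hσ, abs_of_nonneg hgp]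
    have hexp : Real.exp (-((θ - u) ^ 2) / (8 * σ ^ 2)) =
        Real.exp (-(8 * σ ^ 2)⁻¹ * (u - θ) ^ 2) := by
      congr 1
      field_simp
      ring
    calc |ℓ u| * (σ⁻¹ * (|(aeval ((x - u) / σ) (hermite (n + 1)) : ℝ)| * gaussPDF σ (x - u)))
        ≤ (|ℓ 0| + |u|) * (σ⁻¹ * (C * Real.exp (-((x - u) ^ 2) / (4 * σ ^ 2)))) := by
          apply mul_le_mul hlu _ (by positivity) (by positivity)
          apply mul_le_mul_of_nonneg_left hb1 (by positivity)
      _ ≤ (|ℓ 0| + |u|) * (σ⁻¹ * (C * (Real.exp ((4 * σ ^ 2)⁻¹) *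
            Real.exp (-((θ - u) ^ 2) / (8 * σ ^ 2))))) := by
          apply mul_le_mul_of_nonneg_left _ (by positivity)
          apply mul_le_mul_of_nonneg_left _ (by positivity)
          apply mul_le_mul_of_nonneg_left hshift hC0
      _ = bound u := by
          simp only [hbound_def, hK_def]
          rw [← hexp]
          ring
  · rw [hbound_def]
    exact integrable_linear_gauss (|ℓ 0| * K) K θ ((8 * σ ^ 2)⁻¹) (by positivity)
  · filter_upwards with u
    intro x hx
    have h := hasDerivAt_hermite_gaussPDF σ hσ n (x - u)
    have h2 := h.comp x ((hasDerivAt_id x).sub_const u)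
    simp only [mul_one] at h2
    exact h2.const_mul (ℓ u)

lemma iteratedDeriv_smoothed_eq (hσ : 0 < σ) (hℓ : LipschitzWith 1 ℓ) (n : ℕ) :
    iteratedDeriv n (smoothed σ ℓ) = fun θ => (-σ⁻¹) ^ n * Gfun σ ℓ n θ := by
  induction n with
  | zero =>
    funext θ
    rw [iteratedDeriv_zero]
    simp only [pow_zero, one_mul]
    rw [smoothed, Gfun]
    rw [← MeasureTheory.integral_sub_left_eq_self
      (fun u => ℓ u * ((aeval ((θ - u) / σ) (hermite 0) : ℝ) * gaussPDF σ (θ - u))) volume θ]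
    apply MeasureTheory.integral_congr_ae
    filter_upwards with t
    simp [hermite_zero, sub_sub_cancel]
  | succ n ih =>
    funext θ
    rw [iteratedDeriv_succ, ih]
    have h := ((hasDerivAt_Gfun hσ hℓ n θ).const_mul ((-σ⁻¹) ^ n)).deriv
    rw [h]
    ring

/-- derivatives of Gaussian-smoothed Lipschitz functions via
Hermite polynomials, from the proof of Lemma 2.  For 1-Lipschitz `ℓ` and
`σ > 0`, the `r`-th derivative of `ℓ_σ = ℓ ∗ φ_σ` equals
`σ^{-r} (-1)^r ∫ ℓ(θ−t) φ_σ(t) H_r(t/σ) dt`, and consequently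
`|ℓ_σ^{(r)}(θ₁) − ℓ_σ^{(r)}(θ₂)| ≤ σ^{-r} |θ₁ − θ₂| √(r!)`. -/
theorem stmt_17 (ℓ : ℝ → ℝ) (hℓ : LipschitzWith 1 ℓ) (σ : ℝ) (hσ : 0 < σ)
    (r : ℕ) (hr : 1 ≤ r) :
    (∀ θ : ℝ,
      iteratedDeriv r (smoothed σ ℓ) θ =
        (σ ^ r)⁻¹ * (-1 : ℝ) ^ r *
          ∫ t, ℓ (θ - t) * gaussPDF σ t *
            (Polynomial.aeval (t / σ) (Polynomial.hermite r) : ℝ)) ∧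
    (∀ θ₁ θ₂ : ℝ,
      |iteratedDeriv r (smoothed σ ℓ) θ₁ - iteratedDeriv r (smoothed σ ℓ) θ₂| ≤
        (σ ^ r)⁻¹ * |θ₁ - θ₂| * Real.sqrt (Nat.factorial r)) := by
  have hpow : ((-σ⁻¹ : ℝ)) ^ r = (σ ^ r)⁻¹ * (-1 : ℝ) ^ r := by
    rw [neg_pow, inv_pow]
    ring
  have part1 : ∀ θ : ℝ,
      iteratedDeriv r (smoothed σ ℓ) θ =
        (σ ^ r)⁻¹ * (-1 : ℝ) ^ r *
          ∫ t, ℓ (θ - t) * gaussPDF σ t * (aeval (t / σ) (hermite r) : ℝ) := by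
    intro θ
    have h0 := congrFun (iteratedDeriv_smoothed_eq hσ hℓ r) θ
    have hG : Gfun σ ℓ r θ =
        ∫ t, ℓ (θ - t) * gaussPDF σ t * (aeval (t / σ) (hermite r) : ℝ) := by
      rw [Gfun, ← MeasureTheory.integral_sub_left_eq_self
        (fun t => ℓ (θ - t) * gaussPDF σ t * (aeval (t / σ) (hermite r) : ℝ)) volume θ]
      apply MeasureTheory.integral_congr_ae
      filter_upwards with u
      simp only [sub_sub_cancel]
      ring
    rw [h0, hG, hpow]
  refine ⟨part1, fun θ₁ θ₂ => ?_⟩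
  -- integrability of the integrands
  have h_int : ∀ θ : ℝ, Integrable
      (fun t : ℝ => ℓ (θ - t) * gaussPDF σ t * (aeval (t / σ) (hermite r) : ℝ)) := by
    intro θ
    have hbnd : ∀ t : ℝ, |ℓ (θ - t)| ≤ (|ℓ 0| + |θ|) + |t| := by
      intro t
      have h1 := lip_growth hℓ (θ - t)
      have h2 : |θ - t| ≤ |θ| + |t| := by
        rw [sub_eq_add_neg]
        calc |θ + -t| ≤ |θ| + |-t| := abs_add_le _ _
          _ = |θ| + |t| := by rw [abs_neg]
      linarith
    have h := integrable_growth_gauss' σ hσ (hermite r) (fun t => ℓ (θ - t))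
      (hℓ.continuous.comp (continuous_const.sub continuous_id)) (|ℓ 0| + |θ|) hbnd
    apply h.congr
    filter_upwards with t
    ring
  have hgauss_int : Integrable
      (fun t : ℝ => |θ₁ - θ₂| * (|(aeval (t / σ) (hermite r) : ℝ)| * gaussPDF σ t)) := by
    have h := ((integrable_aeval_gaussPDF σ hσ (hermite r)).abs).const_mul |θ₁ - θ₂|
    apply h.congr
    filter_upwards with t
    rw [abs_mul, abs_of_nonneg (gaussPDF_pos hσ t).le]
  have hdiff : iteratedDeriv r (smoothed σ ℓ) θ₁ - iteratedDeriv r (smoothed σ ℓ) θ₂ =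
      (σ ^ r)⁻¹ * (-1 : ℝ) ^ r *
        ∫ t, (ℓ (θ₁ - t) - ℓ (θ₂ - t)) * gaussPDF σ t * (aeval (t / σ) (hermite r) : ℝ) := by
    rw [part1 θ₁, part1 θ₂, ← mul_sub, ← MeasureTheory.integral_sub (h_int θ₁) (h_int θ₂)]
    congr 1
    apply MeasureTheory.integral_congr_ae
    filter_upwards with t
    ring
  have hlip : ∀ t : ℝ, |ℓ (θ₁ - t) - ℓ (θ₂ - t)| ≤ |θ₁ - θ₂| := by
    intro t
    have h := hℓ.dist_le_mul (θ₁ - t) (θ₂ - t)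
    rw [Real.dist_eq, Real.dist_eq, NNReal.coe_one, one_mul, sub_sub_sub_cancel_right] at h
    exact h
  have habs : |iteratedDeriv r (smoothed σ ℓ) θ₁ - iteratedDeriv r (smoothed σ ℓ) θ₂| =
      (σ ^ r)⁻¹ *
        |∫ t, (ℓ (θ₁ - t) - ℓ (θ₂ - t)) * gaussPDF σ t * (aeval (t / σ) (hermite r) : ℝ)| := by
    rw [hdiff, abs_mul, abs_mul, abs_inv, abs_pow, abs_of_pos hσ, abs_pow, abs_neg, abs_one,
      one_pow, mul_one]
  rw [habs]
  have step1 : |∫ t, (ℓ (θ₁ - t) - ℓ (θ₂ - t)) * gaussPDF σ t *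
      (aeval (t / σ) (hermite r) : ℝ)| ≤
      ∫ t, |(ℓ (θ₁ - t) - ℓ (θ₂ - t)) * gaussPDF σ t * (aeval (t / σ) (hermite r) : ℝ)| := by
    have h := MeasureTheory.norm_integral_le_integral_norm (μ := MeasureTheory.volume)
      (fun t : ℝ => (ℓ (θ₁ - t) - ℓ (θ₂ - t)) * gaussPDF σ t * (aeval (t / σ) (hermite r) : ℝ))
    simpa only [Real.norm_eq_abs] using h
  have step2 : ∫ t, |(ℓ (θ₁ - t) - ℓ (θ₂ - t)) * gaussPDF σ t *
      (aeval (t / σ) (hermite r) : ℝ)| ≤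
      ∫ t, |θ₁ - θ₂| * (|(aeval (t / σ) (hermite r) : ℝ)| * gaussPDF σ t) := by
    have hDint : Integrable (fun t : ℝ => |(ℓ (θ₁ - t) - ℓ (θ₂ - t)) * gaussPDF σ t *
        (aeval (t / σ) (hermite r) : ℝ)|) := by
      apply (((h_int θ₁).sub (h_int θ₂)).abs).congr
      filter_upwards with t
      simp only [Pi.sub_apply]
      congr 1
      ring
    apply MeasureTheory.integral_mono hDint hgauss_int
    intro t
    dsimp only
    rw [abs_mul, abs_mul, abs_of_nonneg (gaussPDF_pos hσ t).le]
    calc |ℓ (θ₁ - t) - ℓ (θ₂ - t)| * gaussPDF σ t * |(aeval (t / σ) (hermite r) : ℝ)|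
        ≤ |θ₁ - θ₂| * gaussPDF σ t * |(aeval (t / σ) (hermite r) : ℝ)| := by
          apply mul_le_mul_of_nonneg_right _ (abs_nonneg _)
          exact mul_le_mul_of_nonneg_right (hlip t) (gaussPDF_pos hσ t).le
      _ = |θ₁ - θ₂| * (|(aeval (t / σ) (hermite r) : ℝ)| * gaussPDF σ t) := by ring
  have step3 : ∫ t, |θ₁ - θ₂| * (|(aeval (t / σ) (hermite r) : ℝ)| * gaussPDF σ t) =
      |θ₁ - θ₂| * ∫ t, |(aeval (t / σ) (hermite r) : ℝ)| * gaussPDF σ t :=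
    MeasureTheory.integral_const_mul _ _
  have step4 := hermite_abs_integral_le σ hσ r
  have hfin : |∫ t, (ℓ (θ₁ - t) - ℓ (θ₂ - t)) * gaussPDF σ t *
      (aeval (t / σ) (hermite r) : ℝ)| ≤ |θ₁ - θ₂| * Real.sqrt (Nat.factorial r) := by
    calc _ ≤ _ := step1
      _ ≤ _ := step2
      _ = _ := step3
      _ ≤ |θ₁ - θ₂| * Real.sqrt (Nat.factorial r) :=
        mul_le_mul_of_nonneg_left step4 (abs_nonneg _)
  calc (σ ^ r)⁻¹ * |∫ t, (ℓ (θ₁ - t) - ℓ (θ₂ - t)) * gaussPDF σ t *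
        (aeval (t / σ) (hermite r) : ℝ)|
      ≤ (σ ^ r)⁻¹ * (|θ₁ - θ₂| * Real.sqrt (Nat.factorial r)) :=
        mul_le_mul_of_nonneg_left hfin (by positivity)
    _ = (σ ^ r)⁻¹ * |θ₁ - θ₂| * Real.sqrt (Nat.factorial r) := by ring
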